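/- Let c₁, …, c_{n+1} be i.i.d. real-valued random variables whose common distribution is atomless. Define the rank R = 1 + #{ i ≤ n : cᵢ < c_{n+1} }. Then R is uniformly distributed on {1, 2, …, n+1}, i.e., P(R = j) = 1/(n+1) for every j ∈ {1,…,n+1}. -/

import Mathlib

open MeasureTheory ProbabilityTheory Finset
open scoped ENNReal NNReal

namespace RankAux

variable {n : ℕ}

noncomputable def N (m : Fin (n+1)) (x : Fin (n+1) → ℝ) : ℕ :=
  ∑ i : Fin (n+1), if x i < x m then 1 else 0

lemma measurable_N (m : Fin (n+1)) : Measurable (N m) := by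
  apply Finset.measurable_sum
  intro i _
  exact Measurable.ite
    (measurableSet_lt (measurable_pi_apply i) (measurable_pi_apply m))
    measurable_const measurable_const

lemma N_eq_card (m : Fin (n+1)) (x : Fin (n+1) → ℝ) :
    N m x = (Finset.univ.filter fun i => x i < x m).card := by
  rw [Finset.card_filter]; rfl

lemma N_le (m : Fin (n+1)) (x : Fin (n+1) → ℝ) : N m x ≤ n := by
  rw [N_eq_card]
  have hsub : (Finset.univ.filter fun i => x i < x m) ⊆ Finset.univ.erase m := by
    intro i hi
    simp only [Finset.mem_filter] at hi
    refine Finset.mem_erase.2 ⟨?_, Finset.mem_univ _⟩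
    rintro rfl; exact lt_irrefl _ hi.2
  calc (Finset.univ.filter fun i => x i < x m).card ≤ (Finset.univ.erase m).card :=
        Finset.card_le_card hsub
    _ = n := by
        rw [Finset.card_erase_of_mem (Finset.mem_univ m)]
        simp

lemma N_inj {x : Fin (n+1) → ℝ} (hx : Function.Injective x) :
    Function.Injective (fun m => N m x) := by
  have key : ∀ a b : Fin (n+1), x a < x b → N a x < N b x := by
    intro a b hab
    rw [N_eq_card, N_eq_card]
    have hsub : (Finset.univ.filter fun i => x i < x a) ⊆
        (Finset.univ.filter fun i => x i < x b) := by
      intro i hi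
      simp only [Finset.mem_filter] at hi ⊢
      exact ⟨hi.1, hi.2.trans hab⟩
    apply Finset.card_lt_card
    refine (Finset.ssubset_iff_of_subset hsub).2 ⟨a, ?_, ?_⟩
    · simp [hab]
    · simp
  intro a b hab
  rcases lt_trichotomy (x a) (x b) with h | h | h
  · exact absurd hab (ne_of_lt (key a b h))
  · exact hx h
  · exact absurd hab.symm (ne_of_lt (key b a h))


lemma exists_N {x : Fin (n+1) → ℝ} (hx : Function.Injective x) {k : ℕ} (hk : k ≤ n) :
    ∃ m, N m x = k := by
  have hinj : Function.Injective
      (fun m : Fin (n+1) => (⟨N m x, Nat.lt_succ_of_le (N_le m x)⟩ : Fin (n+1))) := by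
    intro a b hab
    exact N_inj hx (congrArg Fin.val hab)
  obtain ⟨m, hm⟩ := Finite.injective_iff_surjective.mp hinj ⟨k, Nat.lt_succ_of_le hk⟩
  exact ⟨m, congrArg Fin.val hm⟩

lemma N_comp (e : Equiv.Perm (Fin (n+1))) (m : Fin (n+1)) (x : Fin (n+1) → ℝ) :
    N m (x ∘ e) = N (e m) x := by
  simp only [N, Function.comp]
  exact Equiv.sum_comp e (fun i => if x i < x (e m) then 1 else 0)

lemma map_perm (μ : Measure ℝ) [IsProbabilityMeasure μ] (e : Equiv.Perm (Fin (n+1))) :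
    (Measure.pi fun _ : Fin (n+1) => μ).map (fun x => x ∘ e) = Measure.pi fun _ => μ := by
  have hT : Measurable (fun x : Fin (n+1) → ℝ => x ∘ e) :=
    measurable_pi_iff.mpr fun i => measurable_pi_apply (e i)
  refine (Measure.pi_eq fun s hs => ?_).symm
  rw [Measure.map_apply hT (MeasurableSet.univ_pi hs)]
  have hpre : (fun x : Fin (n+1) → ℝ => x ∘ e) ⁻¹' Set.pi Set.univ s
      = Set.pi Set.univ (fun j => s (e.symm j)) := by
    ext x
    simp only [Set.mem_preimage, Set.mem_pi, Set.mem_univ, true_implies, Function.comp]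
    constructor
    · intro h j; have := h (e.symm j); rwa [Equiv.apply_symm_apply] at this
    · intro h i; have := h (e i); rwa [Equiv.symm_apply_apply] at this
  rw [hpre, Measure.pi_pi]
  exact Equiv.prod_comp e.symm (fun i => μ (s i))

end RankAux


open MeasureTheory ProbabilityTheory

/-- If `c₁, …, c_{n+1}` are i.i.d. real random variables with
atomless common law `μ`, the rank `R = 1 + #{i ≤ n : cᵢ < c_{n+1}}` of the last
variable is uniform on `{1, …, n+1}`. -/
theorem rank_uniform
    {Ω : Type*} [MeasurableSpace Ω] (P : Measure Ω) [IsProbabilityMeasure P]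
    (n : ℕ) (μ : Measure ℝ) [IsProbabilityMeasure μ] [NullSingletonClass μ]
    (c : Fin (n + 1) → Ω → ℝ)
    (hmeas : ∀ i, Measurable (c i))
    (hindep : iIndepFun c P)
    (hlaw : ∀ i, P.map (c i) = μ)
    (R : Ω → ℕ)
    (hR : R = fun ω =>
      1 + ({i : Fin n | c i.castSucc ω < c (Fin.last n) ω}).ncard)
    (j : ℕ) (hj1 : 1 ≤ j) (hjn : j ≤ n + 1) :
    (P {ω | R ω = j}).toReal = 1 / (n + 1) := by
    classical
  set k := j - 1 with hkdef
  have hkn : k ≤ n := by omega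
  set J : Ω → (Fin (n+1) → ℝ) := fun ω i => c i ω with hJdef
  have hJ : Measurable J := measurable_pi_iff.mpr hmeas
  set π : Measure (Fin (n+1) → ℝ) := Measure.pi fun _ => μ with hπdef
  haveI hπprob : IsProbabilityMeasure π := by rw [hπdef]; infer_instance
  -- joint law is the product measure
  have hmap : P.map J = π := by
    rw [hπdef]
    refine (Measure.pi_eq fun s hs => ?_).symm
    rw [Measure.map_apply hJ (MeasurableSet.univ_pi hs)]
    have hpre : J ⁻¹' Set.pi Set.univ s = ⋂ i ∈ Finset.univ, c i ⁻¹' s i := by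
      ext ω; simp [hJdef, Set.mem_pi]
    rw [hpre, hindep.measure_inter_preimage_eq_mul Finset.univ (fun i _ => hs i)]
    exact Finset.prod_congr rfl fun i _ => by
      rw [← hlaw i, Measure.map_apply (hmeas i) (hs i)]
  -- diagonals are null
  have hdiag : ∀ a b : Fin (n+1), a ≠ b → π {x | x a = x b} = 0 := by
    intro a b hab
    have hS : MeasurableSet {x : Fin (n+1) → ℝ | x a = x b} :=
      measurableSet_eq_fun (measurable_pi_apply a) (measurable_pi_apply b)
    have hDm : MeasurableSet {p : ℝ × ℝ | p.1 = p.2} :=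
      measurableSet_eq_fun measurable_fst measurable_snd
    have hind2 := hindep.indepFun hab
    rw [indepFun_iff_map_prod_eq_prod_map_map (hmeas a).aemeasurable (hmeas b).aemeasurable,
      hlaw a, hlaw b] at hind2
    have hpre : J ⁻¹' {x | x a = x b}
        = (fun ω => (c a ω, c b ω)) ⁻¹' {p : ℝ × ℝ | p.1 = p.2} := rfl
    rw [← hmap, Measure.map_apply hJ hS, hpre,
      ← Measure.map_apply ((hmeas a).prodMk (hmeas b)) hDm, hind2,
      Measure.prod_apply hDm]
    have hz : ∀ r : ℝ, μ (Prod.mk r ⁻¹' {p : ℝ × ℝ | p.1 = p.2}) = 0 := by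
      intro r
      have : (Prod.mk r ⁻¹' {p : ℝ × ℝ | p.1 = p.2}) = {r} := by ext y; simp [eq_comm]
      rw [this]; exact measure_singleton r
    simp [hz]
  -- the set of injective (tie-free) configurations
  set G : Set (Fin (n+1) → ℝ) := {x | Function.Injective x} with hGdef
  have hGm : MeasurableSet G := by
    have hGeq : G = ⋂ a, ⋂ b, {x : Fin (n+1) → ℝ | x a = x b → a = b} := by
      ext x
      simp only [hGdef, Set.mem_setOf_eq, Set.mem_iInter, Function.Injective]
    rw [hGeq]
    refine MeasurableSet.iInter fun a => MeasurableSet.iInter fun b => ?_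
    by_cases hab : a = b
    · subst hab
      have : {x : Fin (n+1) → ℝ | x a = x a → a = a} = Set.univ := by ext x; simp
      rw [this]; exact MeasurableSet.univ
    · have : {x : Fin (n+1) → ℝ | x a = x b → a = b} = {x | x a = x b}ᶜ := by
        ext x; simp [hab]
      rw [this]
      exact (measurableSet_eq_fun (measurable_pi_apply a) (measurable_pi_apply b)).compl
  have hGc : π Gᶜ = 0 := by
    have hsub : Gᶜ ⊆ ⋃ a, ⋃ b, ⋃ (_ : a ≠ b), {x : Fin (n+1) → ℝ | x a = x b} := by
      intro x hx
      simp only [hGdef, Set.mem_compl_iff, Set.mem_setOf_eq, Function.Injective] at hx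
      push_neg at hx
      obtain ⟨a, b, hab, hne⟩ := hx
      exact Set.mem_iUnion.2 ⟨a, Set.mem_iUnion.2 ⟨b, Set.mem_iUnion.2 ⟨hne, hab⟩⟩⟩
    exact measure_mono_null hsub (measure_iUnion_null fun a =>
      measure_iUnion_null fun b => measure_iUnion_null fun hab => hdiag a b hab)
  have hG1 : π G = 1 := by
    refine le_antisymm prob_le_one ?_
    calc (1 : ℝ≥0∞) = π (G ∪ Gᶜ) := by rw [Set.union_compl_self]; exact (measure_univ).symm
      _ ≤ π G + π Gᶜ := measure_union_le _ _
      _ = π G := by rw [hGc, add_zero]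
  -- rank events
  set B : Fin (n+1) → Set (Fin (n+1) → ℝ) := fun m => RankAux.N m ⁻¹' {k} with hBdef
  have hBm : ∀ m, MeasurableSet (B m) :=
    fun m => RankAux.measurable_N m (measurableSet_singleton k)
  have hperm : ∀ e : Equiv.Perm (Fin (n+1)), π.map (fun x => x ∘ e) = π := by
    intro e; rw [hπdef]; exact RankAux.map_perm μ e
  have hswap : ∀ m, π (B m) = π (B (Fin.last n)) := by
    intro m
    set e := Equiv.swap m (Fin.last n) with hedef
    have hT : Measurable (fun x : Fin (n+1) → ℝ => x ∘ e) :=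
      measurable_pi_iff.mpr fun i => measurable_pi_apply (e i)
    calc π (B m) = (π.map (fun x => x ∘ e)) (B m) := by rw [hperm e]
      _ = π ((fun x : Fin (n+1) → ℝ => x ∘ e) ⁻¹' B m) := Measure.map_apply hT (hBm m)
      _ = π (B (Fin.last n)) := by
          congr 1
          ext x
          simp only [hBdef, Set.mem_preimage, Set.mem_singleton_iff]
          rw [RankAux.N_comp e m x, hedef, Equiv.swap_apply_left]
  have hdisj : Pairwise (Function.onFun Disjoint (fun m => B m ∩ G)) := by
    intro a b hab
    rw [Function.onFun, Set.disjoint_left]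
    rintro x ⟨hxa, hxG⟩ ⟨hxb, -⟩
    simp only [hBdef, Set.mem_preimage, Set.mem_singleton_iff] at hxa hxb
    exact hab (RankAux.N_inj hxG (hxa.trans hxb.symm))
  have hcover : (⋃ m, B m ∩ G) = G := by
    refine Set.Subset.antisymm (Set.iUnion_subset fun m => Set.inter_subset_right) ?_
    intro x hxG
    obtain ⟨m, hm⟩ := RankAux.exists_N hxG hkn
    exact Set.mem_iUnion.2 ⟨m, ⟨by simp [hBdef, hm], hxG⟩⟩
  have hsum : ∑ m : Fin (n+1), π (B m ∩ G) = 1 := by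
    rw [← tsum_fintype (L := SummationFilter.unconditional _), ← measure_iUnion hdisj (fun m => (hBm m).inter hGm), hcover, hG1]
  have hBG : ∀ m, π (B m ∩ G) = π (B m) := by
    intro m
    refine le_antisymm (measure_mono Set.inter_subset_left) ?_
    calc π (B m) = π ((B m ∩ G) ∪ (B m ∩ Gᶜ)) := by rw [Set.inter_union_compl]
      _ ≤ π (B m ∩ G) + π (B m ∩ Gᶜ) := measure_union_le _ _
      _ = π (B m ∩ G) := by
          rw [measure_mono_null Set.inter_subset_right hGc, add_zero]
  have hkey : (↑(n+1) : ℝ≥0∞) * π (B (Fin.last n)) = 1 := by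
    calc (↑(n+1) : ℝ≥0∞) * π (B (Fin.last n))
        = ∑ _m : Fin (n+1), π (B (Fin.last n)) := by
          rw [Finset.sum_const, Finset.card_univ, Fintype.card_fin, nsmul_eq_mul]
      _ = ∑ m : Fin (n+1), π (B m ∩ G) :=
          Finset.sum_congr rfl fun m _ => by rw [hBG m, hswap m]
      _ = 1 := hsum
  -- identify the event
  have hEvent : {ω | R ω = j} = J ⁻¹' (B (Fin.last n)) := by
    ext ω
    simp only [Set.mem_setOf_eq, Set.mem_preimage, hBdef, Set.mem_singleton_iff, hR]
    have hcount : RankAux.N (Fin.last n) (J ω)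
        = ({i : Fin n | c i.castSucc ω < c (Fin.last n) ω}).ncard := by
      rw [Set.ncard_eq_toFinset_card', Set.toFinset_setOf, Finset.card_filter]
      show (∑ i : Fin (n+1), if c i ω < c (Fin.last n) ω then 1 else 0) = _
      rw [Fin.sum_univ_castSucc]
      simp
    rw [hcount]
    omega
  rw [hEvent, ← Measure.map_apply hJ (hBm _), hmap]
  have := congrArg ENNReal.toReal hkey
  rw [ENNReal.toReal_mul, ENNReal.toReal_one, ENNReal.toReal_natCast] at this
  have hne : ((n : ℝ) + 1) ≠ 0 := by positivity
  rw [eq_div_iff hne, mul_comm]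
  push_cast at this ⊢
  linarith
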